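/- Let Λ be a free ℤ-module with an integer-valued symmetric bilinear form. There exists a bimultiplicative map ε: Λ × Λ → {±1} satisfying ε(α,β) = (−1)^{(α|α)(β|β)} (−1)^{(α|β)} ε(β,α) for all α, β ∈ Λ. -/

import Mathlib

/-- On a free ℤ-module of finite rank with an integer-valued symmetric bilinear form,
there exists a bimultiplicative map ε : Λ × Λ → {±1} with
ε(α,β) = (−1)^{(α|α)(β|β)} (−1)^{(α|β)} ε(β,α). -/
theorem stmt_12 (Λ : Type*) [AddCommGroup Λ] [Module ℤ Λ]
    [Module.Free ℤ Λ] [Module.Finite ℤ Λ]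
    (B : Λ →ₗ[ℤ] Λ →ₗ[ℤ] ℤ) (hsymm : ∀ x y, B x y = B y x) :
    ∃ ε : Λ → Λ → ℤˣ,
      (∀ a a' b : Λ, ε (a + a') b = ε a b * ε a' b) ∧
      (∀ a b b' : Λ, ε a (b + b') = ε a b * ε a b') ∧
      (∀ a b : Λ, ε a b =
        (-1 : ℤˣ) ^ (B a a * B b b) * (-1 : ℤˣ) ^ (B a b) * ε b a) := by
  classical
  set ι := Module.Free.ChooseBasisIndex ℤ Λ
  set bb : Module.Basis ι ℤ Λ := Module.Free.chooseBasis ℤ Λ with hbb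
  let e := Fintype.equivFin ι
  set C : Λ →ₗ[ℤ] Λ →ₗ[ℤ] ℤ := bb.constr ℤ (fun i => bb.constr ℤ (fun j =>
      if e j < e i then B (bb i) (bb i) * B (bb j) (bb j) + B (bb i) (bb j) else 0)) with hC
  have hCb : ∀ i j, C (bb i) (bb j) =
      if e j < e i then B (bb i) (bb i) * B (bb j) (bb j) + B (bb i) (bb j) else 0 := by
    intro i j
    simp only [hC, Module.Basis.constr_basis]
  set g : Λ → Λ → ZMod 2 := fun a b =>
    ((C a b + C b a + B a a * B b b + B a b : ℤ) : ZMod 2) with hg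
  have h2 : (2 : ZMod 2) = 0 := by decide
  have keyl : ∀ a a' b : Λ, g (a + a') b = g a b + g a' b := by
    intro a a' b
    simp only [hg, map_add, LinearMap.add_apply]
    push_cast
    rw [hsymm a' a]
    ring_nf
    rw [h2]
    ring
  have keyr : ∀ a b b' : Λ, g a (b + b') = g a b + g a b' := by
    intro a b b'
    simp only [hg, map_add, LinearMap.add_apply]
    push_cast
    rw [hsymm b' b]
    ring_nf
    rw [h2]
    ring
  have gbasis : ∀ i j, g (bb i) (bb j) = 0 := by
    intro i j
    simp only [hg]
    rw [ZMod.intCast_zmod_eq_zero_iff_dvd]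
    rcases lt_trichotomy (e j) (e i) with h | h | h
    · rw [hCb i j, hCb j i, if_pos h, if_neg (asymm h)]
      exact ⟨B (bb i) (bb i) * B (bb j) (bb j) + B (bb i) (bb j), by ring⟩
    · have : i = j := e.injective (Fin.ext (by omega))
      subst this
      rw [hCb i i, if_neg (lt_irrefl _)]
      obtain ⟨k, hk⟩ := Int.even_mul_succ_self (B (bb i) (bb i))
      exact ⟨k, by linear_combination hk⟩
    · rw [hCb i j, hCb j i, if_neg (asymm h), if_pos h]
      rw [hsymm (bb j) (bb i)]
      exact ⟨B (bb j) (bb j) * B (bb i) (bb i) + B (bb i) (bb j), by ring⟩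
  have hspan : ∀ x : Λ, x ∈ Submodule.span ℤ (Set.range bb) := by
    rw [bb.span_eq]; intro x; trivial
  have step1 : ∀ (i : ι) (b : Λ), g (bb i) b = 0 := by
    intro i b
    let H : Λ →+ ZMod 2 := AddMonoidHom.mk' (g (bb i)) (keyr (bb i))
    show H b = 0
    refine Submodule.span_induction ?_ ?_ ?_ ?_ (hspan b)
    · rintro x ⟨j, rfl⟩
      exact gbasis i j
    · exact H.map_zero
    · intro x y _ _ hx hy
      rw [H.map_add, hx, hy, add_zero]
    · intro r x _ hx
      have h5 := Int.cast_smul_eq_zsmul (R := ℤ) r x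
      rw [Int.cast_id] at h5
      rw [h5, map_zsmul H r x, hx, smul_zero]
  have gzero : ∀ a b : Λ, g a b = 0 := by
    intro a b
    let H : Λ →+ ZMod 2 := AddMonoidHom.mk' (fun x => g x b) (fun x y => keyl x y b)
    show H a = 0
    refine Submodule.span_induction ?_ ?_ ?_ ?_ (hspan a)
    · rintro x ⟨i, rfl⟩
      exact step1 i b
    · exact H.map_zero
    · intro x y _ _ hx hy
      rw [H.map_add, hx, hy, add_zero]
    · intro r x _ hx
      have h5 := Int.cast_smul_eq_zsmul (R := ℤ) r x
      rw [Int.cast_id] at h5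
      rw [h5, map_zsmul H r x, hx, smul_zero]
  have geven : ∀ a b : Λ, Even (C a b + C b a + B a a * B b b + B a b) := by
    intro a b
    have := gzero a b
    rw [hg] at this
    obtain ⟨k, hk⟩ := (ZMod.intCast_zmod_eq_zero_iff_dvd _ 2).mp this
    exact ⟨k, by omega⟩
  refine ⟨fun a b => (-1 : ℤˣ) ^ (C a b), ?_, ?_, ?_⟩
  · intro a a' b
    show (-1 : ℤˣ) ^ (C (a + a') b) = (-1 : ℤˣ) ^ (C a b) * (-1 : ℤˣ) ^ (C a' b)
    rw [show C (a + a') b = C a b + C a' b by simp [map_add], zpow_add]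
  · intro a b b'
    show (-1 : ℤˣ) ^ (C a (b + b')) = (-1 : ℤˣ) ^ (C a b) * (-1 : ℤˣ) ^ (C a b')
    rw [show C a (b + b') = C a b + C a b' by simp [map_add], zpow_add]
  · intro a b
    show (-1 : ℤˣ) ^ (C a b) =
        (-1 : ℤˣ) ^ (B a a * B b b) * (-1 : ℤˣ) ^ (B a b) * (-1 : ℤˣ) ^ (C b a)
    have he : Even (C a b - (B a a * B b b + B a b + C b a)) := by
      rcases geven a b with ⟨k, hk⟩
      exact ⟨k - (C b a + B a a * B b b + B a b), by omega⟩
    rw [show C a b = (B a a * B b b + B a b + C b a)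
        + (C a b - (B a a * B b b + B a b + C b a)) by ring]
    rw [zpow_add, zpow_add, zpow_add, Even.neg_one_zpow he, mul_one]
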